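/- The elliptic dynamical R-matrix R(u,λ) = ∑_a E_{aa}⊗E_{aa} + ∑_{a≠b} ( α(u,λ_{ab}) E_{aa}⊗E_{bb} + β(u,λ_{ab}) E_{ab}⊗E_{ba} ), with α(u,ξ) = θ(u)θ(ξ+γ)/(θ(u-γ)θ(ξ)) and β(u,ξ) = -θ(u+ξ)θ(γ)/(θ(u-γ)θ(ξ)), satisfies the inversion relation R(u,λ) R^{21}(-u,λ) = 1. -/

import Mathlib

/-- The Jacobi theta function. -/
noncomputable def jtheta (τ u : ℂ) : ℂ :=
  -∑' m : ℤ, Complex.exp ((Real.pi : ℂ) * Complex.I * τ * ((m : ℂ) + 1 / 2) ^ 2 +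
      2 * (Real.pi : ℂ) * Complex.I * ((m : ℂ) + 1 / 2) * (u + 1 / 2))

open Complex

noncomputable def gterm (τ z c : ℂ) (n : ℤ) : ℂ :=
  Complex.exp ((Real.pi : ℂ) * Complex.I * τ * ((n : ℂ) + c) ^ 2 +
      2 * (Real.pi : ℂ) * Complex.I * ((n : ℂ) + c) * z)

lemma jtheta_eq (τ u : ℂ) : jtheta τ u = -∑' m : ℤ, gterm τ (u + 1/2) (1/2) m := rfl

lemma gterm_eq (τ z c : ℂ) (n : ℤ) :
    gterm τ z c n = Complex.exp ((Real.pi:ℂ) * I * τ * c^2 + 2*(Real.pi:ℂ)*I*c*z) *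
      jacobiTheta₂_term n (z + τ*c) τ := by
  rw [gterm, jacobiTheta₂_term, ← Complex.exp_add]
  congr 1
  ring

lemma summable_norm_jacobiTheta₂_term {τ : ℂ} (hτ : 0 < τ.im) (z : ℂ) :
    Summable fun n : ℤ => ‖jacobiTheta₂_term n z τ‖ := by
  have h : ∀ n : ℤ, ‖jacobiTheta₂_term n z τ‖ =
      ‖jacobiTheta₂_term n ((z.im : ℂ) * I) ((τ.im : ℂ) * I)‖ := by
    intro n
    rw [norm_jacobiTheta₂_term, norm_jacobiTheta₂_term]
    simp
  simp_rw [h]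
  rw [summable_norm_iff, summable_jacobiTheta₂_term_iff]
  simpa using hτ

lemma summable_norm_gterm {τ : ℂ} (hτ : 0 < τ.im) (z c : ℂ) :
    Summable fun n : ℤ => ‖gterm τ z c n‖ := by
  simp_rw [gterm_eq, norm_mul]
  exact (summable_norm_jacobiTheta₂_term hτ (z + τ*c)).mul_left _

lemma exp_eq_neg_exp {a b : ℂ} (m : ℤ) (h : a = b + (m : ℂ) * (2 * (Real.pi:ℂ) * I) + (Real.pi:ℂ) * I) :
    Complex.exp a = -Complex.exp b := by
  rw [h, Complex.exp_add, Complex.exp_add, Complex.exp_int_mul_two_pi_mul_I,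
    Complex.exp_pi_mul_I]
  ring

lemma exp_eq_exp {a b : ℂ} (m : ℤ) (h : a = b + (m : ℂ) * (2 * (Real.pi:ℂ) * I)) :
    Complex.exp a = Complex.exp b := by
  rw [h, Complex.exp_add, Complex.exp_int_mul_two_pi_mul_I, mul_one]

lemma gterm_neg_term (τ u : ℂ) (m : ℤ) :
    gterm τ (-u + 1/2) (1/2) (-1-m) = -gterm τ (u + 1/2) (1/2) m := by
  rw [gterm, gterm]
  apply exp_eq_neg_exp (-(m+1))
  push_cast
  ring

lemma hasSum_split {M : Type*} [AddCommMonoid M] [TopologicalSpace M] [ContinuousAdd M]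
    (F : ℤ × ℤ → M) {a b : M}
    (hA : HasSum (fun pq : ℤ × ℤ => F (pq.1 + pq.2, pq.1 - pq.2)) a)
    (hB : HasSum (fun pq : ℤ × ℤ => F (pq.1 + pq.2, pq.1 - pq.2 - 1)) b) :
    HasSum F (a + b) := by
  set s : Set (ℤ × ℤ) := {z | Even (z.1 + z.2)} with hs
  have hmemA : ∀ pq : ℤ × ℤ, (pq.1 + pq.2, pq.1 - pq.2) ∈ s := by
    intro pq
    simp only [hs, Set.mem_setOf_eq, Int.even_iff]
    omega
  have hmemB : ∀ pq : ℤ × ℤ, (pq.1 + pq.2, pq.1 - pq.2 - 1) ∈ sᶜ := by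
    intro pq
    simp only [hs, Set.mem_compl_iff, Set.mem_setOf_eq, Int.even_iff]
    omega
  let fA : ℤ × ℤ → s := fun pq => ⟨(pq.1 + pq.2, pq.1 - pq.2), hmemA pq⟩
  let fB : ℤ × ℤ → ↥sᶜ := fun pq => ⟨(pq.1 + pq.2, pq.1 - pq.2 - 1), hmemB pq⟩
  have hbA : Function.Bijective fA := by
    constructor
    · rintro ⟨p, q⟩ ⟨p', q'⟩ h
      simp only [fA, Subtype.ext_iff, Prod.ext_iff] at h
      simp only [Prod.ext_iff]
      omega
    · rintro ⟨⟨m, n⟩, hmn⟩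
      obtain ⟨r, hr⟩ := hmn
      exact ⟨(r, m - r), by simp only [fA, Subtype.ext_iff, Prod.ext_iff]; omega⟩
  have hbB : Function.Bijective fB := by
    constructor
    · rintro ⟨p, q⟩ ⟨p', q'⟩ h
      simp only [fB, Subtype.ext_iff, Prod.ext_iff] at h
      simp only [Prod.ext_iff]
      omega
    · rintro ⟨⟨m, n⟩, hmn⟩
      simp only [hs, Set.mem_compl_iff, Set.mem_setOf_eq, Int.even_iff] at hmn
      refine ⟨((m + n + 1)/2, m - (m + n + 1)/2), ?_⟩
      simp only [fB, Subtype.ext_iff, Prod.ext_iff]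
      omega
  have hA' : HasSum (F ∘ (↑) : s → M) a :=
    ((Equiv.ofBijective fA hbA).hasSum_iff).mp hA
  have hB' : HasSum (F ∘ (↑) : ↥sᶜ → M) b :=
    ((Equiv.ofBijective fB hbB).hasSum_iff).mp hB
  exact hA'.add_compl hB'

noncomputable def QF (τ w : ℂ) : ℂ := ∑' n : ℤ, gterm (2*τ) w 0 n
noncomputable def SF (τ w : ℂ) : ℂ := ∑' n : ℤ, gterm (2*τ) w (1/2) n

lemma caseA_term (τ x y : ℂ) (p q : ℤ) :
    gterm τ (x + 1/2) (1/2) (p+q) * gterm τ (y + 1/2) (1/2) (p-q) =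
      -(gterm (2*τ) (x+y) (1/2) p * gterm (2*τ) (x-y) 0 q) := by
  rw [gterm, gterm, gterm, gterm, ← Complex.exp_add, ← Complex.exp_add]
  apply exp_eq_neg_exp p
  push_cast
  ring

lemma caseB_term (τ x y : ℂ) (p q : ℤ) :
    gterm τ (x + 1/2) (1/2) (p+q) * gterm τ (y + 1/2) (1/2) (p-q-1) =
      gterm (2*τ) (x+y) 0 p * gterm (2*τ) (x-y) (1/2) q := by
  rw [gterm, gterm, gterm, gterm, ← Complex.exp_add, ← Complex.exp_add]
  apply exp_eq_exp p
  push_cast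
  ring

lemma prodFormula {τ : ℂ} (hτ : 0 < τ.im) (x y : ℂ) :
    jtheta τ x * jtheta τ y = QF τ (x+y) * SF τ (x-y) - SF τ (x+y) * QF τ (x-y) := by
  have h2τ : 0 < (2*τ).im := by simp [hτ]
  have hsum : ∀ z c : ℂ, Summable fun n : ℤ => gterm (2*τ) z c n :=
    fun z c => (summable_norm_gterm h2τ z c).of_norm
  have hQ : ∀ w, HasSum (gterm (2*τ) w 0) (QF τ w) := fun w => (hsum w 0).hasSum
  have hS : ∀ w, HasSum (gterm (2*τ) w (1/2)) (SF τ w) := fun w => (hsum w (1/2)).hasSum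
  set F : ℤ × ℤ → ℂ :=
    fun z => gterm τ (x + 1/2) (1/2) z.1 * gterm τ (y + 1/2) (1/2) z.2 with hF
  have hmulA : HasSum (fun pq : ℤ × ℤ =>
      gterm (2*τ) (x+y) (1/2) pq.1 * gterm (2*τ) (x-y) 0 pq.2)
      (SF τ (x+y) * QF τ (x-y)) :=
    HasSum.mul (hS _) (hQ _)
      (summable_mul_of_summable_norm (summable_norm_gterm h2τ _ _)
        (summable_norm_gterm h2τ _ _))
  have hmulB : HasSum (fun pq : ℤ × ℤ =>
      gterm (2*τ) (x+y) 0 pq.1 * gterm (2*τ) (x-y) (1/2) pq.2)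
      (QF τ (x+y) * SF τ (x-y)) :=
    HasSum.mul (hQ _) (hS _)
      (summable_mul_of_summable_norm (summable_norm_gterm h2τ _ _)
        (summable_norm_gterm h2τ _ _))
  have hA : HasSum (fun pq : ℤ × ℤ => F (pq.1 + pq.2, pq.1 - pq.2))
      (-(SF τ (x+y) * QF τ (x-y))) := by
    have heq : (fun pq : ℤ × ℤ => F (pq.1 + pq.2, pq.1 - pq.2)) =
        fun pq : ℤ × ℤ => -(gterm (2*τ) (x+y) (1/2) pq.1 * gterm (2*τ) (x-y) 0 pq.2) :=
      funext fun pq => caseA_term τ x y pq.1 pq.2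
    rw [heq]
    exact hmulA.neg
  have hB : HasSum (fun pq : ℤ × ℤ => F (pq.1 + pq.2, pq.1 - pq.2 - 1))
      (QF τ (x+y) * SF τ (x-y)) := by
    have heq : (fun pq : ℤ × ℤ => F (pq.1 + pq.2, pq.1 - pq.2 - 1)) =
        fun pq : ℤ × ℤ => gterm (2*τ) (x+y) 0 pq.1 * gterm (2*τ) (x-y) (1/2) pq.2 :=
      funext fun pq => caseB_term τ x y pq.1 pq.2
    rw [heq]
    exact hmulB
  have hsplit := hasSum_split F hA hB
  have hEx : Summable fun n : ℤ => ‖gterm τ (x + 1/2) (1/2) n‖ := summable_norm_gterm hτ _ _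
  have hEy : Summable fun n : ℤ => ‖gterm τ (y + 1/2) (1/2) n‖ := summable_norm_gterm hτ _ _
  have hprod : HasSum F ((∑' n : ℤ, gterm τ (x + 1/2) (1/2) n) *
      (∑' n : ℤ, gterm τ (y + 1/2) (1/2) n)) :=
    HasSum.mul hEx.of_norm.hasSum hEy.of_norm.hasSum
      (summable_mul_of_summable_norm hEx hEy)
  have := hprod.unique hsplit
  rw [jtheta_eq, jtheta_eq, neg_mul_neg, this]
  ring

lemma jtheta_neg (τ u : ℂ) : jtheta τ (-u) = -jtheta τ u := by
  have h1 := (Function.Involutive.toPerm (fun m : ℤ => -1 - m)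
      (fun m => by ring)).tsum_eq (gterm τ (-u + 1/2) (1/2))
  simp only [Function.Involutive.toPerm, Equiv.coe_fn_mk] at h1
  rw [jtheta_eq, jtheta_eq, ← h1]
  simp_rw [gterm_neg_term]
  rw [tsum_neg]

lemma prodFormula' {τ : ℂ} (hτ : 0 < τ.im) (a b : ℂ) :
    jtheta τ (a+b) * jtheta τ (a-b) = QF τ (2*a) * SF τ (2*b) - SF τ (2*a) * QF τ (2*b) := by
  have h := prodFormula hτ (a+b) (a-b)
  rw [show a+b+(a-b) = 2*a by ring, show a+b-(a-b) = 2*b by ring] at h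
  exact h

lemma weier {τ : ℂ} (hτ : 0 < τ.im) (u ξ γ : ℂ) :
    jtheta τ (u+ξ) * jtheta τ (u-ξ) * (jtheta τ γ * jtheta τ γ) =
      jtheta τ (u+γ) * jtheta τ (u-γ) * (jtheta τ ξ * jtheta τ ξ) +
        (jtheta τ u * jtheta τ u) * (jtheta τ (γ+ξ) * jtheta τ (γ-ξ)) := by
  have h1 := prodFormula' hτ u ξ
  have h2 := prodFormula' hτ γ 0
  have h3 := prodFormula' hτ u γ
  have h4 := prodFormula' hτ ξ 0
  have h5 := prodFormula' hτ u 0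
  have h6 := prodFormula' hτ γ ξ
  rw [add_zero, sub_zero, mul_zero] at h2 h4 h5
  calc jtheta τ (u+ξ) * jtheta τ (u-ξ) * (jtheta τ γ * jtheta τ γ)
      = (QF τ (2*u) * SF τ (2*ξ) - SF τ (2*u) * QF τ (2*ξ)) *
        (QF τ (2*γ) * SF τ 0 - SF τ (2*γ) * QF τ 0) := by rw [h1, h2]
    _ = (QF τ (2*u) * SF τ (2*γ) - SF τ (2*u) * QF τ (2*γ)) *
        (QF τ (2*ξ) * SF τ 0 - SF τ (2*ξ) * QF τ 0) +
        (QF τ (2*u) * SF τ 0 - SF τ (2*u) * QF τ 0) *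
        (QF τ (2*γ) * SF τ (2*ξ) - SF τ (2*γ) * QF τ (2*ξ)) := by ring
    _ = _ := by rw [← h3, ← h4, ← h5, ← h6]

lemma jtheta_neg' (τ a b : ℂ) : jtheta τ (a - b) = -jtheta τ (b - a) := by
  rw [show a - b = -(b-a) by ring, jtheta_neg]

/-- `α(u,ξ) = θ(u)θ(ξ+γ)/(θ(u-γ)θ(ξ))`. -/
noncomputable def alphaF (τ γ u ξ : ℂ) : ℂ :=
  jtheta τ u * jtheta τ (ξ + γ) / (jtheta τ (u - γ) * jtheta τ ξ)

/-- `β(u,ξ) = -θ(u+ξ)θ(γ)/(θ(u-γ)θ(ξ))`. -/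
noncomputable def betaF (τ γ u ξ : ℂ) : ℂ :=
  -(jtheta τ (u + ξ) * jtheta τ γ) / (jtheta τ (u - γ) * jtheta τ ξ)

lemma inv2 {τ γ u ξ : ℂ} (h1 : jtheta τ (u - γ) ≠ 0)
    (h2 : jtheta τ (-u - γ) ≠ 0) (hξ : jtheta τ ξ ≠ 0) :
    alphaF τ γ u ξ * betaF τ γ (-u) (-ξ) + betaF τ γ u ξ * alphaF τ γ (-u) ξ = 0 := by
  unfold alphaF betaF
  rw [show -u + -ξ = -(u + ξ) by ring, jtheta_neg τ (u+ξ), jtheta_neg τ u, jtheta_neg τ ξ]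
  field_simp
  ring

lemma inv1 {τ γ u ξ : ℂ} (hτ : 0 < τ.im) (h1 : jtheta τ (u - γ) ≠ 0)
    (h2 : jtheta τ (-u - γ) ≠ 0) (hξ : jtheta τ ξ ≠ 0) :
    alphaF τ γ u ξ * alphaF τ γ (-u) (-ξ) + betaF τ γ u ξ * betaF τ γ (-u) ξ = 1 := by
  have hw := weier hτ u ξ γ
  rw [show γ + ξ = ξ + γ from add_comm _ _] at hw
  have hug : jtheta τ (u + γ) ≠ 0 := by
    intro h
    apply h2
    rw [show -u - γ = -(u + γ) by ring, jtheta_neg, h, neg_zero]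
  unfold alphaF betaF
  rw [show -ξ + γ = γ - ξ by ring, show -u + ξ = ξ - u by ring,
      jtheta_neg τ u, jtheta_neg τ ξ, jtheta_neg' τ ξ u,
      show -u - γ = -(u + γ) by ring, jtheta_neg τ (u + γ)]
  field_simp
  linear_combination hw

/-- The elliptic dynamical R-matrix
`R(u,λ) = ∑_a E_{aa}⊗E_{aa} + ∑_{a≠b} (α(u,λ_{ab}) E_{aa}⊗E_{bb} + β(u,λ_{ab}) E_{ab}⊗E_{ba})`. -/
noncomputable def Rell (N : ℕ) (τ γ u : ℂ) (lam : Fin N → ℂ) :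
    Matrix (Fin N × Fin N) (Fin N × Fin N) ℂ := fun p q =>
  if p.1 = p.2 then (if q = p then 1 else 0)
  else
    (if q = p then alphaF τ γ u (lam p.1 - lam p.2) else 0) +
      (if q = (p.2, p.1) then betaF τ γ u (lam p.1 - lam p.2) else 0)

/-- `R^{21}(u,λ) = P R(u,λ) P`, the flip-conjugated R-matrix. -/
noncomputable def Rell21 (N : ℕ) (τ γ u : ℂ) (lam : Fin N → ℂ) :
    Matrix (Fin N × Fin N) (Fin N × Fin N) ℂ := fun p q =>
  Rell N τ γ u lam (p.2, p.1) (q.2, q.1)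

/-- The elliptic dynamical R-matrix satisfies the inversion relation
`R(u,λ) R^{21}(-u,λ) = 1`. -/
theorem Rell_inversion (N : ℕ) (τ γ u : ℂ) (hτ : 0 < τ.im) (hγ : γ ≠ 0)
    (lam : Fin N → ℂ)
    (h1 : jtheta τ (u - γ) ≠ 0) (h2 : jtheta τ (-u - γ) ≠ 0)
    (hlam : ∀ a b : Fin N, a ≠ b → jtheta τ (lam a - lam b) ≠ 0) :
    Rell N τ γ u lam * Rell21 N τ γ (-u) lam = 1 := by
  ext ⟨a, b⟩ ⟨c, d⟩
  rw [Matrix.mul_apply]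
  by_cases hab : a = b
  · subst hab
    have hfst : ∀ r, Rell N τ γ u lam (a, a) r = if r = (a, a) then 1 else 0 := by
      intro r; simp [Rell]
    simp_rw [hfst, ite_mul, one_mul, zero_mul]
    rw [Finset.sum_ite_eq' Finset.univ ((a, a) : Fin N × Fin N)]
    simp only [Finset.mem_univ, if_true, Rell21, Rell, Matrix.one_apply]
    simp [Prod.ext_iff, eq_comm, and_comm]
  · set ξ := lam a - lam b with hξdef
    have hξ : jtheta τ ξ ≠ 0 := hlam a b hab
    set G : Fin N × Fin N → ℂ := fun r => Rell21 N τ γ (-u) lam r (c, d) with hG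
    have hfst : ∀ r, Rell N τ γ u lam (a, b) r * G r =
        (if r = ((a, b) : Fin N × Fin N) then alphaF τ γ u ξ * G r else 0) +
        (if r = ((b, a) : Fin N × Fin N) then betaF τ γ u ξ * G r else 0) := by
      intro r
      simp only [Rell, hab, if_false, add_mul, ite_mul, zero_mul, ← hξdef]
    rw [Finset.sum_congr rfl fun r _ => hfst r]
    rw [Finset.sum_add_distrib, Finset.sum_ite_eq' Finset.univ ((a, b) : Fin N × Fin N),
      Finset.sum_ite_eq' Finset.univ ((b, a) : Fin N × Fin N)]
    simp only [Finset.mem_univ, if_true]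
    have hba : ¬ (b = a) := fun h => hab h.symm
    have hGab : G (a, b) =
        (if (d, c) = ((b, a) : Fin N × Fin N) then alphaF τ γ (-u) (-ξ) else 0) +
        (if (d, c) = ((a, b) : Fin N × Fin N) then betaF τ γ (-u) (-ξ) else 0) := by
      simp only [hG, Rell21, Rell, hba, if_false, hξdef, neg_sub]
    have hGba : G (b, a) =
        (if (d, c) = ((a, b) : Fin N × Fin N) then alphaF τ γ (-u) ξ else 0) +
        (if (d, c) = ((b, a) : Fin N × Fin N) then betaF τ γ (-u) ξ else 0) := by
      simp only [hG, Rell21, Rell, hab, if_false, hξdef]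
    rw [hGab, hGba, Matrix.one_apply]
    by_cases hq1 : ((d, c) : Fin N × Fin N) = (b, a)
    · have hq1' : d = b ∧ c = a := Prod.ext_iff.mp hq1
      have hpq : ((a, b) : Fin N × Fin N) = (c, d) :=
        Prod.ext_iff.mpr ⟨hq1'.2.symm, hq1'.1.symm⟩
      have hq2 : ¬ ((d, c) : Fin N × Fin N) = (a, b) := by
        intro h
        exact hab (((Prod.ext_iff.mp h).1.symm).trans hq1'.1)
      simp only [if_pos hq1, if_neg hq2, if_pos hpq, add_zero, zero_add]
      exact inv1 hτ h1 h2 hξ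
    · by_cases hq2 : ((d, c) : Fin N × Fin N) = (a, b)
      · have hq2' : d = a ∧ c = b := Prod.ext_iff.mp hq2
        have hpq : ¬ ((a, b) : Fin N × Fin N) = (c, d) := by
          intro h
          exact hab ((Prod.ext_iff.mp h).1.trans hq2'.2)
        simp only [if_neg hq1, if_pos hq2, if_neg hpq, add_zero, zero_add]
        exact inv2 h1 h2 hξ
      · have hpq : ¬ ((a, b) : Fin N × Fin N) = (c, d) := by
          intro h
          obtain ⟨h', h''⟩ := Prod.ext_iff.mp h
          exact hq1 (Prod.ext_iff.mpr ⟨h''.symm, h'.symm⟩)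
        simp only [if_neg hq1, if_neg hq2, if_neg hpq, add_zero, mul_zero, zero_add]
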